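/- For t < 0, the solution r(t) of the ODE r'(t) = sin(r(t)) with r(0) = 1 satisfies e^t < r(t) < e^{t/2}. -/

import Mathlib

open Set Real

private lemma lipschitzWith_sin : LipschitzWith 1 Real.sin := by
  apply lipschitzWith_of_nnnorm_deriv_le Real.differentiable_sin
  intro x
  rw [Real.deriv_sin]
  have := Real.abs_cos_le_one x
  rw [← NNReal.coe_le_coe, coe_nnnorm, Real.norm_eq_abs]
  simpa using this

/-- For `t < 0`, the solution `r(t)` of `r' = sin r`, `r(0) = 1`,
satisfies `e^t < r(t) < e^{t/2}`. -/
theorem stmt1 (r : ℝ → ℝ) (h0 : r 0 = 1)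
    (hode : ∀ t : ℝ, HasDerivAt r (Real.sin (r t)) t) :
    ∀ t < (0:ℝ), Real.exp t < r t ∧ r t < Real.exp (t / 2) := by
  have hcont : Continuous r :=
    continuous_iff_continuousAt.2 fun t => (hode t).differentiableAt.continuousAt
  -- r never takes a value c with sin c = 0, other than via r 0
  have hne : ∀ c : ℝ, Real.sin c = 0 → ∀ t0 : ℝ, r t0 = c → r 0 = c := by
    intro c hc t0 ht0
    have ht0mem : t0 ∈ Ioo (min t0 0 - 1) (max t0 0 + 1) :=
      ⟨by linarith [min_le_left t0 0], by linarith [le_max_left t0 0]⟩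
    have key : EqOn r (fun _ => c) (Icc (min t0 0 - 1) (max t0 0 + 1)) := by
      refine ODE_solution_unique_of_mem_Icc
        (v := fun _ x => Real.sin x) (s := fun _ => univ) (K := 1)
        (fun _ _ => (_root_.lipschitzWith_sin).lipschitzOnWith) ht0mem
        hcont.continuousOn (fun t _ => hode t) (fun _ _ => trivial)
        continuousOn_const (fun t _ => ?_) (fun _ _ => trivial) ht0
      simpa [hc] using hasDerivAt_const t c
    have h0mem : (0 : ℝ) ∈ Icc (min t0 0 - 1) (max t0 0 + 1) :=
      ⟨by linarith [min_le_right t0 0], by linarith [le_max_right t0 0]⟩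
    exact key h0mem
  have hne0 : ∀ t, r t ≠ 0 := by
    intro t h
    have := hne 0 Real.sin_zero t h
    rw [h0] at this; norm_num at this
  have hnepi : ∀ t, r t ≠ π := by
    intro t h
    have := hne π Real.sin_pi t h
    rw [h0] at this
    have := Real.pi_gt_three
    linarith
  have hpos : ∀ t, 0 < r t := by
    intro t
    by_contra h
    push_neg at h
    obtain ⟨t', _, ht'⟩ := intermediate_value_uIcc (a := t) (b := 0) hcont.continuousOn
      (Set.mem_uIcc.2 (Or.inl ⟨h, by rw [h0]; norm_num⟩))
    exact hne0 t' ht'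
  have hltpi : ∀ t, r t < π := by
    intro t
    by_contra h
    push_neg at h
    obtain ⟨t', _, ht'⟩ := intermediate_value_uIcc (a := (0:ℝ)) (b := t) hcont.continuousOn
      (Set.mem_uIcc.2 (Or.inl ⟨by rw [h0]; linarith [Real.pi_gt_three], h⟩))
    exact hnepi t' ht'
  have hmono : StrictMono r := strictMono_of_deriv_pos fun t => by
    rw [(hode t).deriv]
    exact Real.sin_pos_of_pos_of_lt_pi (hpos t) (hltpi t)
  have hr1 : ∀ t < (0:ℝ), r t < 1 := fun t ht => h0 ▸ hmono ht
  -- lower bound: F t = r t * exp (-t) is strictly decreasing on Iic 0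
  have hF : ∀ t, HasDerivAt (fun t => r t * Real.exp (-t))
      ((Real.sin (r t) - r t) * Real.exp (-t)) t := by
    intro t
    have := (hode t).mul (hasDerivAt_neg t).exp
    refine this.congr_deriv ?_
    ring
  have hFanti : StrictAntiOn (fun t => r t * Real.exp (-t)) (Iic 0) := by
    refine strictAntiOn_of_deriv_neg (convex_Iic 0)
      (hcont.mul (Real.continuous_exp.comp continuous_neg)).continuousOn fun t ht => ?_
    rw [interior_Iic] at ht
    rw [(hF t).deriv]
    exact mul_neg_of_neg_of_pos (by linarith [Real.sin_lt (hpos t)]) (Real.exp_pos _)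
  -- upper bound: G t = r t * exp (-(t/2)) is strictly increasing on Iic 0
  have hG : ∀ t, HasDerivAt (fun t => r t * Real.exp (-(t / 2)))
      ((Real.sin (r t) - r t / 2) * Real.exp (-(t / 2))) t := by
    intro t
    have := (hode t).mul ((hasDerivAt_id t).div_const 2).neg.exp
    refine this.congr_deriv ?_
    simp only [Pi.neg_apply, id_eq]
    ring
  have hGmono : StrictMonoOn (fun t => r t * Real.exp (-(t / 2))) (Iic 0) := by
    refine strictMonoOn_of_deriv_pos (convex_Iic 0)
      (hcont.mul (Real.continuous_exp.comp (continuous_id.div_const 2).neg)).continuousOn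
      fun t ht => ?_
    rw [interior_Iic] at ht
    rw [(hG t).deriv]
    have h1 := Real.sin_gt_sub_cube (hpos t)
    have h2 := hpos t
    have h3 := hr1 t ht
    refine mul_pos (by nlinarith [sq_nonneg (r t), mul_pos h2 h2]) (Real.exp_pos _)
  intro t ht
  constructor
  · have h1 : r 0 * Real.exp (-0) < r t * Real.exp (-t) :=
      hFanti (mem_Iic.2 ht.le) (mem_Iic.2 le_rfl) ht
    rw [h0, Real.exp_neg t] at h1
    simp only [neg_zero, Real.exp_zero, mul_one, one_mul] at h1
    rw [← div_eq_mul_inv, lt_div_iff₀ (Real.exp_pos t), one_mul] at h1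
    exact h1
  · have h1 : r t * Real.exp (-(t / 2)) < r 0 * Real.exp (-(0 / 2)) :=
      hGmono (mem_Iic.2 ht.le) (mem_Iic.2 le_rfl) ht
    rw [h0, Real.exp_neg (t / 2)] at h1
    simp only [zero_div, neg_zero, Real.exp_zero, mul_one, one_mul] at h1
    rw [← div_eq_mul_inv, div_lt_one (Real.exp_pos _)] at h1
    exact h1
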